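/- If γ ∈ ℂ_p satisfies ∑_{n≥0} γ^{p^n}/p^n = 0 and val_p(γ) = 1/(p−1), and γ_ℓ := ∑_{i=0}^ℓ γ^{p^i}/p^i, then val_p(γ_ℓ) ≥ p^{ℓ+1}/(p−1) − (ℓ+1) for every ℓ ≥ 0. -/

import Mathlib

/-!
STATEMENT 1: If `γ` in a complete nonarchimedean extension of `ℚ_p` (e.g. `ℂ_p`)
satisfies `∑_{n ≥ 0} γ^(p^n)/p^n = 0` and `val_p γ = 1/(p-1)`, and
`γ_ℓ := ∑_{i=0}^ℓ γ^(p^i)/p^i`, then `val_p (γ_ℓ) ≥ p^(ℓ+1)/(p-1) - (ℓ+1)`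
for every `ℓ ≥ 0`.  Here `val_p` is normalized by `val_p p = 1`, so that
`val_p x = -log_p ‖x‖`.
-/

open scoped BigOperators

theorem valuation_gamma_ell_lower_bound
    (p : ℕ) (hp : p.Prime)
    (K : Type*) [NormedField K] [CompleteSpace K] [IsUltrametricDist K]
    [CharZero K]
    -- the norm extends the p-adic norm: ‖p‖ = p⁻¹, i.e. val_p p = 1
    (hnorm : ‖(p : K)‖ = (p : ℝ)⁻¹)
    -- the p-adic valuation, normalized so that val_p p = 1
    (val : K → ℝ) (hval : ∀ x : K, val x = -Real.logb p ‖x‖)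
    (γ : K)
    (hroot : ∑' n : ℕ, γ ^ (p ^ n) / (p : K) ^ n = 0)
    (hγ : val γ = 1 / ((p : ℝ) - 1))
    (γℓ : ℕ → K)
    (hγℓ : ∀ ℓ : ℕ, γℓ ℓ = ∑ i ∈ Finset.range (ℓ + 1), γ ^ (p ^ i) / (p : K) ^ i) :
    ∀ ℓ : ℕ, val (γℓ ℓ) ≥ (p : ℝ) ^ (ℓ + 1) / ((p : ℝ) - 1) - (ℓ + 1) := by
  intro ℓ
  have hp1 : (1:ℝ) < (p:ℝ) := by exact_mod_cast hp.one_lt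
  have hp0 : (0:ℝ) < (p:ℝ) := by linarith
  have hpm1 : (0:ℝ) < (p:ℝ) - 1 := by linarith
  set q : ℝ := (p:ℝ) with hq
  set f : ℕ → K := fun i => γ ^ (p ^ i) / (p : K) ^ i with hfdef
  set e : ℕ → ℝ := fun i => (i:ℝ) - q ^ i / (q - 1) with hedef
  -- γ ≠ 0
  have hγne : γ ≠ 0 := by
    intro h
    rw [h, hval] at hγ
    simp only [norm_zero, Real.logb_zero, neg_zero] at hγ
    have : (0:ℝ) < 1 / (q - 1) := by positivity
    linarith [hγ ▸ this]
  have hγpos : 0 < ‖γ‖ := norm_pos_iff.mpr hγne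
  -- ‖γ‖ = q ^ (-(1/(q-1)))
  have hγnorm : ‖γ‖ = q ^ (-(1/(q-1)) : ℝ) := by
    have h1 : Real.logb q ‖γ‖ = -(1/(q-1)) := by
      have := hγ; rw [hval] at this; linarith
    rw [← h1, Real.rpow_logb hp0 hp1.ne' hγpos]
  -- norm of f i
  have hfnorm : ∀ i : ℕ, ‖f i‖ = q ^ (e i) := by
    intro i
    have h1 : ‖γ ^ (p ^ i)‖ = q ^ (-(q ^ i / (q - 1))) := by
      rw [norm_pow, hγnorm, ← Real.rpow_natCast (q ^ (-(1/(q-1)) : ℝ)) (p ^ i),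
        ← Real.rpow_mul hp0.le]
      congr 1
      push_cast
      ring
    have h2 : ‖(p : K) ^ i‖ = q ^ (-(i:ℝ)) := by
      rw [norm_pow, hnorm, ← Real.rpow_natCast (q⁻¹) i, ← Real.rpow_neg_one q,
        ← Real.rpow_mul hp0.le]
      norm_num
    have h3 : (0:ℝ) < q ^ (-(i:ℝ)) := Real.rpow_pos_of_pos hp0 _
    rw [hfdef]
    simp only [norm_div, h1, h2, ← Real.rpow_sub hp0]
    congr 1
    simp only [hedef]
    ring
  -- monotone decay of exponents: e ((m+1) + i) ≤ e (m+1) - i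
  have hstep : ∀ m : ℕ, 1 ≤ m → e (m + 1) ≤ e m - 1 := by
    intro m hm
    have hqm : (2:ℝ) ≤ q ^ m := by
      calc (2:ℝ) ≤ q := by rw [hq]; exact_mod_cast hp.two_le
      _ = q ^ 1 := (pow_one q).symm
      _ ≤ q ^ m := pow_le_pow_right₀ hp1.le hm
    have h2 : q ^ (m + 1) / (q - 1) - q ^ m / (q - 1) = q ^ m := by
      rw [pow_succ]; field_simp
    simp only [hedef]
    push_cast
    linarith
  have hmono : ∀ m i : ℕ, e ((m + 1) + i) ≤ e (m + 1) - i := by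
    intro m i
    induction i with
    | zero => simp
    | succ n ih =>
      have h1 : e ((m + 1) + (n + 1)) ≤ e ((m + 1) + n) - 1 := by
        have h := hstep ((m + 1) + n) (by omega)
        have heq : (m + 1) + n + 1 = (m + 1) + (n + 1) := by omega
        rw [heq] at h
        exact h
      push_cast
      push_cast at ih
      linarith
  -- summability
  have hsum : Summable f := by
    apply NonarchimedeanAddGroup.summable_of_tendsto_cofinite_zero
    rw [Nat.cofinite_eq_atTop]
    rw [tendsto_zero_iff_norm_tendsto_zero]
    have hbound : ∀ i : ℕ, ‖f (1 + i)‖ ≤ q ^ (e 1) * ((q⁻¹) ^ i) := by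
      intro i
      rw [hfnorm]
      have h1 : e (1 + i) ≤ e 1 - i := by simpa using hmono 0 i
      calc q ^ (e (1 + i)) ≤ q ^ (e 1 - (i:ℝ)) :=
            Real.rpow_le_rpow_of_exponent_le hp1.le h1
        _ = q ^ (e 1) * (q⁻¹) ^ i := by
            rw [Real.rpow_sub hp0, ← Real.rpow_natCast (q⁻¹) i, ← Real.rpow_neg_one q,
              ← Real.rpow_mul hp0.le, div_eq_mul_inv, ← Real.rpow_neg hp0.le]
            norm_num
    have hlim : Filter.Tendsto (fun i : ℕ => q ^ (e 1) * ((q⁻¹) ^ i)) Filter.atTop (nhds 0) := by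
      rw [show (0:ℝ) = q ^ (e 1) * 0 by ring]
      exact (tendsto_pow_atTop_nhds_zero_of_lt_one (by positivity)
        (by rw [inv_lt_one_iff₀]; right; exact hp1)).const_mul _
    have : Filter.Tendsto (fun i : ℕ => ‖f (1 + i)‖) Filter.atTop (nhds 0) :=
      squeeze_zero (fun i => norm_nonneg _) hbound hlim
    have h2 : Filter.Tendsto (fun i : ℕ => ‖f i‖) Filter.atTop (nhds 0) := by
      rw [← Filter.tendsto_add_atTop_iff_nat 1]
      simpa [Nat.add_comm] using this
    exact h2
  -- split off the partial sum
  have hsplit : γℓ ℓ + ∑' i : ℕ, f (i + (ℓ + 1)) = 0 := by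
    rw [hγℓ ℓ]
    rw [Summable.sum_add_tsum_nat_add (ℓ + 1) hsum]
    exact hroot
  -- tail = first term + rest
  have hsum' : Summable (fun i : ℕ => f (i + (ℓ + 1))) := (summable_nat_add_iff (ℓ + 1)).2 hsum
  have htail : ∑' i : ℕ, f (i + (ℓ + 1)) = f (ℓ + 1) + ∑' i : ℕ, f ((i + (ℓ + 2))) := by
    rw [Summable.tsum_eq_zero_add hsum']
    simp only [zero_add]
    congr 1
    apply tsum_congr
    intro b
    congr 1
    omega
  -- the rest is strictly smaller in norm
  have hrest : ‖∑' i : ℕ, f (i + (ℓ + 2))‖ ≤ q ^ (e (ℓ + 1) - 1) := by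
    apply IsUltrametricDist.norm_tsum_le_of_forall_le_of_nonneg
      (Real.rpow_pos_of_pos hp0 _).le
    intro i
    rw [hfnorm]
    apply Real.rpow_le_rpow_of_exponent_le hp1.le
    have h1 : e ((ℓ + 1) + (i + 1)) ≤ e (ℓ + 1) - (i + 1 : ℕ) := hmono ℓ (i + 1)
    have h2 : (ℓ + 1) + (i + 1) = i + (ℓ + 2) := by omega
    rw [h2] at h1
    push_cast at h1
    linarith
  have hrest_lt : ‖∑' i : ℕ, f (i + (ℓ + 2))‖ < ‖f (ℓ + 1)‖ := by
    rw [hfnorm]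
    exact lt_of_le_of_lt hrest
      (Real.rpow_lt_rpow_of_exponent_lt hp1 (by linarith))
  -- norm of the tail equals the norm of its first term
  have htailnorm : ‖∑' i : ℕ, f (i + (ℓ + 1))‖ = q ^ (e (ℓ + 1)) := by
    rw [htail, IsUltrametricDist.norm_add_eq_max_of_norm_ne_norm hrest_lt.ne',
      max_eq_left hrest_lt.le, hfnorm]
  -- hence the norm of γℓ ℓ
  have hγℓnorm : ‖γℓ ℓ‖ = q ^ (e (ℓ + 1)) := by
    have : γℓ ℓ = -(∑' i : ℕ, f (i + (ℓ + 1))) := by linear_combination hsplit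
    rw [this, norm_neg, htailnorm]
  -- conclude
  rw [hval, hγℓnorm, Real.logb_rpow hp0 hp1.ne']
  simp only [hedef]
  push_cast
  rw [ge_iff_le]
  apply le_of_eq
  ring
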